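/- Assume H is as in the rescaled bicharacteristic system, and let (x, y, λ, μ, ξ) be a C¹ solution of the system on an interval I with x(t) > 0 for all t ∈ I. Define Λ = (λ+1)/x, M = μ/x, Ξ = ξ/x. Then on I: x' = −x + Λ·x²; y' = x·H(x,y)·M; Λ' = −x·⟨H(x,y)M, M⟩ − (x²/2)·⟨∂ₓH(x,y)M, M⟩; M_i' = x·( Λ·M_i − (1/2)·⟨∂_{y_i}H(x,y)M, M⟩ ) for i = 1,…,n−1; Ξ' = x·Λ·Ξ. -/

import Mathlib

open Filter Set

noncomputable section

/-- Apply a matrix `A : Fin d → Fin d → ℝ` to a vector. -/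
def appF {d : ℕ} (A : Fin d → Fin d → ℝ) (v : Fin d → ℝ) : Fin d → ℝ :=
  fun i => ∑ j, A i j * v j

/-- Euclidean dot product on `Fin d → ℝ`. -/
def dotF {d : ℕ} (v w : Fin d → ℝ) : ℝ := ∑ i, v i * w i

/-- The partial derivative `∂ₓH`. -/
def Hx' {d : ℕ} (H : ℝ → (Fin d → ℝ) → (Fin d → Fin d → ℝ)) (x : ℝ) (y : Fin d → ℝ) :
    Fin d → Fin d → ℝ :=
  fderiv ℝ (fun p : ℝ × (Fin d → ℝ) => H p.1 p.2) (x, y) (1, 0)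

/-- The partial derivative `∂_{yᵢ}H`. -/
def Hy' {d : ℕ} (H : ℝ → (Fin d → ℝ) → (Fin d → Fin d → ℝ)) (i : Fin d) (x : ℝ)
    (y : Fin d → ℝ) : Fin d → Fin d → ℝ :=
  fderiv ℝ (fun p : ℝ × (Fin d → ℝ) => H p.1 p.2) (x, y) (0, Pi.single i 1)

/-- `(x, y, λ, μ, ξ)` is a solution of the rescaled bicharacteristic system for `H`
on the set `I`:  `x' = λx`, `y' = Hμ`, `λ' = λ + λ² − ⟨Hμ,μ⟩ − (x/2)⟨∂ₓH μ,μ⟩`,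
`μᵢ' = (1+2λ)μᵢ − (1/2)⟨∂_{yᵢ}H μ,μ⟩`, `ξ' = (1+2λ)ξ`. -/
def IsBicharSol {d m : ℕ} (H : ℝ → (Fin d → ℝ) → (Fin d → Fin d → ℝ))
    (x lam : ℝ → ℝ) (y μ : ℝ → Fin d → ℝ) (ξ : ℝ → Fin m → ℝ) (I : Set ℝ) : Prop :=
  ∀ t ∈ I,
    HasDerivAt x (lam t * x t) t ∧
    HasDerivAt y (appF (H (x t) (y t)) (μ t)) t ∧
    HasDerivAt lam (lam t + (lam t) ^ 2 - dotF (appF (H (x t) (y t)) (μ t)) (μ t)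
      - x t / 2 * dotF (appF (Hx' H (x t) (y t)) (μ t)) (μ t)) t ∧
    (∀ i, HasDerivAt (fun s => μ s i)
      ((1 + 2 * lam t) * μ t i
        - 1 / 2 * dotF (appF (Hy' H i (x t) (y t)) (μ t)) (μ t)) t) ∧
    HasDerivAt ξ ((1 + 2 * lam t) • ξ t) t

end


lemma dot_app_scale {d : ℕ} (A : Fin d → Fin d → ℝ) (v : Fin d → ℝ) (c : ℝ) :
    dotF (appF A (fun i => v i / c)) (fun i => v i / c)
      = dotF (appF A v) v / c ^ 2 := by
  simp only [dotF, appF, Finset.sum_div]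
  refine Finset.sum_congr rfl fun i _ => ?_
  have hs : ∑ j, A i j * (v j / c) = (∑ j, A i j * v j) / c := by
    rw [Finset.sum_div]
    exact Finset.sum_congr rfl fun j _ => (mul_div_assoc _ _ _).symm
  rw [hs, div_mul_div_comm, ← sq]

/-- The rescaled bicharacteristic system in the blow-up coordinates
`Λ = (λ+1)/x`, `M = μ/x`, `Ξ = ξ/x`: one has `x' = −x + Λx²`, `y' = x·H·M`,
`Λ' = −x⟨HM,M⟩ − (x²/2)⟨∂ₓH M,M⟩`, `Mᵢ' = x(ΛMᵢ − (1/2)⟨∂_{yᵢ}H M,M⟩)`, `Ξ' = xΛΞ`;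
i.e. the rescaled Hamilton vector field is `x` times a vector field smooth up to and
transverse to the front face of the blow-up. -/
theorem stmt12 (n m : ℕ) (hn : 2 ≤ n) (hm : 1 ≤ m)
    (H : ℝ → (Fin (n - 1) → ℝ) → (Fin (n - 1) → Fin (n - 1) → ℝ))
    (hH : ContDiff ℝ 1 (fun p : ℝ × (Fin (n - 1) → ℝ) => H p.1 p.2))
    (hsymm : ∀ x y, ∀ i j, H x y i j = H x y j i)
    (x lam : ℝ → ℝ) (y μ : ℝ → Fin (n - 1) → ℝ) (ξ : ℝ → Fin m → ℝ)
    (I : Set ℝ) (hsol : IsBicharSol H x lam y μ ξ I)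
    (hxpos : ∀ t ∈ I, 0 < x t) :
    ∀ t ∈ I,
      HasDerivAt x (-x t + (lam t + 1) / x t * x t ^ 2) t ∧
      HasDerivAt y (x t • appF (H (x t) (y t)) (fun i => μ t i / x t)) t ∧
      HasDerivAt (fun s => (lam s + 1) / x s)
        (-(x t) * dotF (appF (H (x t) (y t)) (fun i => μ t i / x t)) (fun i => μ t i / x t)
          - x t ^ 2 / 2 *
            dotF (appF (Hx' H (x t) (y t)) (fun i => μ t i / x t)) (fun i => μ t i / x t)) t ∧
      (∀ i, HasDerivAt (fun s => μ s i / x s)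
        (x t * ((lam t + 1) / x t * (μ t i / x t)
          - 1 / 2 *
            dotF (appF (Hy' H i (x t) (y t)) (fun j => μ t j / x t))
              (fun j => μ t j / x t))) t) ∧
      HasDerivAt (fun s => (x s)⁻¹ • ξ s)
        ((x t * ((lam t + 1) / x t)) • ((x t)⁻¹ • ξ t)) t := by
  intro t ht
  obtain ⟨hx, hy, hlam, hmu, hxi⟩ := hsol t ht
  have hx0 : x t ≠ 0 := (hxpos t ht).ne'
  refine ⟨?_, ?_, ?_, ?_, ?_⟩
  · convert hx using 1
    field_simp
    ring
  · convert hy using 1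
    funext i
    simp only [Pi.smul_apply, smul_eq_mul, appF, Finset.mul_sum]
    refine Finset.sum_congr rfl fun j _ => ?_
    field_simp
  · have h := (hlam.add_const 1).div hx hx0
    convert h using 1
    rfl
    rfl
    rfl
    rw [dot_app_scale, dot_app_scale]
    field_simp
    ring
  · intro i
    have h := (hmu i).div hx hx0
    convert h using 1
    rfl
    rfl
    rfl
    rw [dot_app_scale]
    field_simp
    ring
  · have hinv : HasDerivAt (fun s => (x s)⁻¹) (-(lam t * x t) / x t ^ 2) t := hx.inv hx0
    have h := hinv.smul hxi
    convert h using 1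
    rfl
    rfl
    rfl
    rfl
    funext i
    simp only [Pi.smul_apply, smul_eq_mul, Pi.add_apply]
    field_simp
    ring
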